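/- Fix x ∈ ℝ. In the ring of formal power series ℝ[[t]], the identity ((1-t)² - x·t) · Σ_{m=0}^{∞} H_m^{(1)}(x) t^m = 1 - t holds, where H_m^{(1)}(x) = ∏_{k=1}^{m}(x + 2cos(2πk/(2m+1)) + 2) and H_0^{(1)}(x) = 1. Equivalently, (1-t)/((1-t)² - xt) = 1 + Σ_{m=1}^{∞} H_m^{(1)}(x) t^m. -/

import Mathlib

open Finset PowerSeries

section auxH1
open Complex Polynomial


lemma finset_eq (m : ℕ) {ζ : ℂ} (hp : IsPrimitiveRoot ζ (2*m+1)) :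
    nthRootsFinset (2*m+1) (1 : ℂ) = (range (2*m+1)).image (ζ ^ ·) := by
  have hpos : 0 < 2*m+1 := by omega
  symm
  apply Finset.eq_of_subset_of_card_le
  · intro y hy
    simp only [Finset.mem_image, Finset.mem_range] at hy
    obtain ⟨k, hk, rfl⟩ := hy
    rw [Polynomial.mem_nthRootsFinset hpos, ← pow_mul, mul_comm, pow_mul, hp.pow_eq_one, one_pow]
  · rw [hp.card_nthRootsFinset, Finset.card_image_of_injOn, Finset.card_range]
    intro i hi j hj h
    exact hp.pow_inj (Finset.mem_range.1 hi) (Finset.mem_range.1 hj) h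

lemma prod_add_root (m : ℕ) (z : ℂ) :
    ∏ k ∈ range (2*m+1), (z + Complex.exp (2*Real.pi*I/(2*m+1)) ^ k) = z^(2*m+1) + 1 := by
  have hpos : 0 < 2*m+1 := by omega
  have hp : IsPrimitiveRoot (Complex.exp (2*Real.pi*I/(2*m+1))) (2*m+1) := by
    have := Complex.isPrimitiveRoot_exp (2*m+1) (by omega)
    convert this using 2
    push_cast; ring
  set ζ := Complex.exp (2*Real.pi*I/(2*m+1)) with hζ
  have h := Polynomial.X_pow_sub_one_eq_prod hpos hp
  have h2 := congrArg (Polynomial.eval (-z)) h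
  rw [finset_eq m hp, Finset.prod_image (fun i hi j hj h =>
      hp.pow_inj (Finset.mem_range.1 hi) (Finset.mem_range.1 hj) h)] at h2
  simp only [Polynomial.eval_pow, Polynomial.eval_sub, Polynomial.eval_X, Polynomial.eval_one,
    Polynomial.eval_prod, Polynomial.eval_sub, Polynomial.eval_C] at h2
  have hodd : Odd (2*m+1) := ⟨m, by ring⟩
  calc ∏ k ∈ range (2*m+1), (z + ζ ^ k)
      = ∏ k ∈ range (2*m+1), ((-1) * (-z - ζ ^ k)) :=
        Finset.prod_congr rfl fun k _ => by ring
    _ = (-1)^(2*m+1) * ∏ k ∈ range (2*m+1), (-z - ζ ^ k) := by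
        rw [Finset.prod_mul_distrib, Finset.prod_const, Finset.card_range]
    _ = z^(2*m+1) + 1 := by rw [← h2, hodd.neg_pow, hodd.neg_pow]; ring

lemma core (m : ℕ) (z : ℂ) (hz : z ≠ 0) (hz1 : z + 1 ≠ 0) :
    ∏ k ∈ Icc 1 m, (z + z⁻¹ + 2 * Complex.cos (2*(Real.pi:ℂ)*k/(2*m+1)))
      = (z^(2*m+1) + 1) / ((z+1) * z^m) := by
  set ζ := Complex.exp (2*Real.pi*I/(2*m+1)) with hζ
  have hden : (2*(m:ℂ)+1) ≠ 0 := by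
    have h : ((2*m+1 : ℕ):ℂ) ≠ 0 := Nat.cast_ne_zero.2 (by omega)
    push_cast at h
    exact h
  have hexp : ∀ k : ℕ, ζ ^ k = Complex.exp ((2*(Real.pi:ℂ)*k/(2*m+1)) * I) := by
    intro k
    rw [hζ, ← Complex.exp_nat_mul]
    congr 1
    field_simp
  have hfac : ∀ k ∈ Icc 1 m,
      z + z⁻¹ + 2 * Complex.cos (2*(Real.pi:ℂ)*k/(2*m+1))
        = (z + ζ^k) * (z + ζ^(2*m+1-k)) * z⁻¹ := by
    intro k hk
    obtain ⟨hk1, hk2⟩ := Finset.mem_Icc.1 hk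
    have hab : ζ^k * ζ^(2*m+1-k) = 1 := by
      rw [← pow_add]
      have : k + (2*m+1-k) = 2*m+1 := by omega
      rw [this, hζ, ← Complex.exp_nat_mul]
      rw [show ((2*m+1 : ℕ) : ℂ) * (2*Real.pi*I/(2*m+1)) = 2*Real.pi*I by
        push_cast; field_simp]
      exact Complex.exp_two_pi_mul_I
    have hcos : 2 * Complex.cos (2*(Real.pi:ℂ)*k/(2*m+1)) = ζ^k + ζ^(2*m+1-k) := by
      rw [Complex.cos, hexp k, hexp (2*m+1-k)]
      have hc : ((2*m+1-k : ℕ) : ℂ) = 2*m+1-k := by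
        push_cast [Nat.cast_sub (by omega : k ≤ 2*m+1)]; ring
      rw [hc]
      rw [show (2*(Real.pi:ℂ)*(2*↑m+1-↑k)/(2*↑m+1)) * I
            = 2*Real.pi*I + -((2*(Real.pi:ℂ)*k/(2*m+1)) * I) by field_simp; ring]
      rw [Complex.exp_add, Complex.exp_two_pi_mul_I, one_mul]
      ring
    rw [hcos, eq_mul_inv_iff_mul_eq₀ hz]
    field_simp
    linear_combination -hab
  rw [Finset.prod_congr rfl hfac]
  rw [Finset.prod_mul_distrib, Finset.prod_mul_distrib, Finset.prod_const, Nat.card_Icc]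
  have hre : ∏ k ∈ Icc 1 m, (z + ζ^(2*m+1-k)) = ∏ k ∈ Icc (m+1) (2*m), (z + ζ^k) := by
    apply Finset.prod_nbij' (fun k => 2*m+1-k) (fun k => 2*m+1-k)
    · intro a ha; simp only [Finset.mem_Icc] at *; omega
    · intro a ha; simp only [Finset.mem_Icc] at *; omega
    · intro a ha; simp only [Finset.mem_Icc] at *; omega
    · intro a ha; simp only [Finset.mem_Icc] at *; omega
    · intro a ha; rfl
  rw [hre]
  have hjoin : (∏ k ∈ Icc 1 m, (z + ζ^k)) * ∏ k ∈ Icc (m+1) (2*m), (z + ζ^k)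
      = ∏ k ∈ Icc 1 (2*m), (z + ζ^k) := by
    rw [← Finset.Ico_add_one_right_eq_Icc, ← Finset.Ico_add_one_right_eq_Icc, ← Finset.Ico_add_one_right_eq_Icc]
    exact Finset.prod_Ico_consecutive _ (by omega) (by omega)
  have hfull : (z + 1) * ∏ k ∈ Icc 1 (2*m), (z + ζ^k) = z^(2*m+1) + 1 := by
    have h := prod_add_root m z
    rw [show range (2*m+1) = insert 0 (Icc 1 (2*m)) by
      ext j; simp [Finset.mem_range, Finset.mem_Icc]; omega] at h
    rw [Finset.prod_insert (by simp)] at h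
    simpa using h
  rw [hjoin, Nat.add_sub_cancel]
  rw [eq_div_iff (mul_ne_zero hz1 (pow_ne_zero m hz))]
  rw [← hfull, inv_pow]
  field_simp

noncomputable def Hf (x : ℝ) : ℕ → ℝ := fun m =>
  ∏ k ∈ Finset.Icc 1 m, (x + 2 * Real.cos (2 * Real.pi * k / (2 * m + 1)) + 2)

lemma Hf_eq (x : ℝ) (m : ℕ) {z : ℂ} (hz : z ≠ 0) (hz1 : z + 1 ≠ 0)
    (hsum : z + z⁻¹ = (x:ℂ) + 2) :
    (Hf x m : ℂ) = (z^(2*m+1) + 1) / ((z+1) * z^m) := by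
  rw [Hf, ← core m z hz hz1]
  push_cast
  refine Finset.prod_congr rfl fun k _ => ?_
  linear_combination -hsum

lemma Hf_rec' (x : ℝ) (hx : x ≠ -4) (m : ℕ) :
    Hf x (m+2) + Hf x m = (x+2) * Hf x (m+1) := by
  obtain ⟨w, hw⟩ := IsAlgClosed.exists_pow_nat_eq (((x:ℂ)+2)^2 - 4) zero_lt_two
  set z := (((x:ℂ)+2) + w)/2 with hzdef
  have hz2 : z^2 - ((x:ℂ)+2)*z + 1 = 0 := by
    rw [hzdef]
    linear_combination (1/4 : ℂ) * hw
  have hz0 : z ≠ 0 := by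
    intro h
    rw [h] at hz2
    simp at hz2
  have hz1 : z + 1 ≠ 0 := by
    intro h
    have hzm : z = -1 := by linear_combination h
    rw [hzm] at hz2
    have hx4 : (x:ℂ) = -4 := by linear_combination hz2
    exact hx (by exact_mod_cast hx4)
  have hsum : z + z⁻¹ = (x:ℂ) + 2 := by
    field_simp
    linear_combination hz2
  have key : (Hf x (m+2) : ℂ) + Hf x m = ((x:ℂ)+2) * Hf x (m+1) := by
    rw [Hf_eq x (m+2) hz0 hz1 hsum, Hf_eq x m hz0 hz1 hsum, Hf_eq x (m+1) hz0 hz1 hsum,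
      ← hsum]
    field_simp
    ring
  exact_mod_cast key

noncomputable def Hpoly (m : ℕ) : Polynomial ℝ :=
  ∏ k ∈ Finset.Icc 1 m, (Polynomial.X + Polynomial.C (2 * Real.cos (2 * Real.pi * k / (2 * m + 1)) + 2))

lemma Hpoly_eval (x : ℝ) (m : ℕ) : (Hpoly m).eval x = Hf x m := by
  rw [Hpoly, Hf, Polynomial.eval_prod]
  exact Finset.prod_congr rfl fun k _ => by simp; ring

lemma Hf_rec (x : ℝ) (m : ℕ) : Hf x (m+2) + Hf x m = (x+2) * Hf x (m+1) := by
  have hQ : Hpoly (m+2) + Hpoly m - (Polynomial.X + Polynomial.C 2) * Hpoly (m+1) = 0 := by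
    apply Polynomial.eq_zero_of_infinite_isRoot
    apply Set.Infinite.mono (s := {(-4 : ℝ)}ᶜ) ?_ ((Set.finite_singleton (-4:ℝ)).infinite_compl)
    intro y hy
    have hy4 : y ≠ -4 := by simpa using hy
    have h := Hf_rec' y hy4 m
    simp only [Set.mem_setOf_eq, Polynomial.IsRoot, Polynomial.eval_sub, Polynomial.eval_add,
      Polynomial.eval_mul, Polynomial.eval_X, Polynomial.eval_C, Hpoly_eval]
    linarith
  have h := congrArg (Polynomial.eval x) hQ
  simp only [Polynomial.eval_sub, Polynomial.eval_add, Polynomial.eval_mul, Polynomial.eval_X,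
    Polynomial.eval_C, Hpoly_eval, Polynomial.eval_zero] at h
  linarith

lemma Hf_zero (x : ℝ) : Hf x 0 = 1 := by simp [Hf]

lemma Hf_one (x : ℝ) : Hf x 1 = x + 1 := by
  rw [Hf, Finset.Icc_self, Finset.prod_singleton]
  have h : (2*Real.pi*(1:ℕ)/(2*(1:ℕ)+1)) = Real.pi - Real.pi/3 := by push_cast; ring
  rw [h, Real.cos_pi_sub, Real.cos_pi_div_three]
  ring

end auxH1

/-- Generating function for `H_m^{(1)}`: in `ℝ[[t]]`,
`((1-t)^2 - x t) · Σ_m H_m^{(1)}(x) t^m = 1 - t`. -/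
theorem genfun_H1 (x : ℝ) :
    ((1 - PowerSeries.X) ^ 2 - PowerSeries.C x * PowerSeries.X) *
      PowerSeries.mk (fun m =>
        ∏ k ∈ Finset.Icc 1 m, (x + 2 * Real.cos (2 * Real.pi * k / (2 * m + 1)) + 2)) =
    1 - PowerSeries.X := by
  show ((1 - PowerSeries.X) ^ 2 - PowerSeries.C x * PowerSeries.X) *
      PowerSeries.mk (Hf x) = 1 - PowerSeries.X
  have h2 : PowerSeries.C (x+2) = PowerSeries.C x + 2 := by
    rw [map_add]
    congr 1
  have expand : ((1 - PowerSeries.X)^2 - PowerSeries.C x * PowerSeries.X) * PowerSeries.mk (Hf x)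
      = PowerSeries.mk (Hf x)
        - PowerSeries.C (x+2) * (PowerSeries.X * PowerSeries.mk (Hf x))
        + PowerSeries.X^2 * (PowerSeries.mk (Hf x)) := by
    rw [h2]; ring
  rw [expand]
  ext n
  rcases n with _ | _ | n
  · simp [PowerSeries.coeff_zero_eq_constantCoeff, map_mul, Hf_zero]
  · rw [map_add, map_sub, PowerSeries.coeff_C_mul, PowerSeries.coeff_succ_X_mul]
    simp [PowerSeries.coeff_X_pow_mul', PowerSeries.coeff_one, PowerSeries.coeff_X,
      Hf_zero, Hf_one]
    ring
  · rw [map_add, map_sub, PowerSeries.coeff_C_mul, PowerSeries.coeff_succ_X_mul,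
      show n+1+1 = n+2 from rfl, PowerSeries.coeff_X_pow_mul]
    simp [PowerSeries.coeff_mk, PowerSeries.coeff_one, PowerSeries.coeff_X]
    linarith [Hf_rec x n]
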